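/- Let M be a symmetric positive definite n×n real matrix, μ : ℝⁿ → (m×n real matrices) with each μ(q) of rank m, and Q(q) := M⁻¹μ(q)ᵀ(μ(q)M⁻¹μ(q)ᵀ)⁻¹μ(q), P(q) := Id − Q(q). Let A be an n×n real matrix such that μ(q)(Aq) = 0 for all q ∈ ℝⁿ (A generates a horizontal symmetry), and let L_d : ℝⁿ × ℝⁿ → ℝ be differentiable and invariant under the one-parameter group generated by A, i.e. L_d(e^{tA}q₀, e^{tA}q₁) = L_d(q₀, q₁) for all t ∈ ℝ and q₀, q₁ ∈ ℝⁿ. If a sequence (q_k) satisfies the GNI equation P(q_k)ᵀ(D₁L_d(q_k, q_{k+1}) + D₂L_d(q_{k−1}, q_k)) = 0 for all k, then the discrete nonholonomic momentum ⟨D₂L_d(q_{k−1}, q_k), A q_k⟩ takes the same value for all k. -/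

import Mathlib

open Matrix

attribute [local instance] Matrix.linftyOpNormedAddCommGroup Matrix.linftyOpNormedSpace
  Matrix.linftyOpNormedRing Matrix.linftyOpNormedAlgebra

/-- `B ↦ B.mulVec q` as a continuous linear map. -/
noncomputable def mulVecCLM {n : ℕ} (q : Fin n → ℝ) :
    Matrix (Fin n) (Fin n) ℝ →L[ℝ] (Fin n → ℝ) :=
  LinearMap.toContinuousLinearMap
    { toFun := fun B => B.mulVec q
      map_add' := fun B C => Matrix.add_mulVec B C q
      map_smul' := fun c B => Matrix.smul_mulVec c B q }

lemma hasDerivAt_exp_mulVec {n : ℕ} (A : Matrix (Fin n) (Fin n) ℝ) (q₀ : Fin n → ℝ) :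
    HasDerivAt (fun t : ℝ => (NormedSpace.exp (t • A)).mulVec q₀) (A.mulVec q₀) 0 := by
  have h := hasDerivAt_exp_smul_const (𝕂 := ℝ) A 0
  have h2 := (mulVecCLM q₀).hasFDerivAt.comp_hasDerivAt 0 h
  simp only [zero_smul, NormedSpace.exp_zero, one_mul] at h2
  exact h2

theorem gni_momentum_preservation {n m : ℕ}
    (M : Matrix (Fin n) (Fin n) ℝ) (hM : M.PosDef) (hMsymm : M.IsSymm)
    (μ : (Fin n → ℝ) → Matrix (Fin m) (Fin n) ℝ) (hμrank : ∀ q, (μ q).rank = m)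
    (Q P : (Fin n → ℝ) → Matrix (Fin n) (Fin n) ℝ)
    (hQ : ∀ q, Q q = M⁻¹ * (μ q)ᵀ * (μ q * M⁻¹ * (μ q)ᵀ)⁻¹ * μ q)
    (hP : ∀ q, P q = 1 - Q q)
    (A : Matrix (Fin n) (Fin n) ℝ)
    (hhoriz : ∀ q : Fin n → ℝ, (μ q).mulVec (A.mulVec q) = 0)
    (Ld : (Fin n → ℝ) × (Fin n → ℝ) → ℝ) (hLd : Differentiable ℝ Ld)
    (hinv : ∀ (t : ℝ) (q₀ q₁ : Fin n → ℝ),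
      Ld ((NormedSpace.exp (t • A)).mulVec q₀, (NormedSpace.exp (t • A)).mulVec q₁) =
        Ld (q₀, q₁))
    (D1Ld D2Ld : (Fin n → ℝ) → (Fin n → ℝ) → (Fin n → ℝ))
    (hD1 : ∀ q₀ q₁ v, fderiv ℝ (fun x => Ld (x, q₁)) q₀ v = dotProduct (D1Ld q₀ q₁) v)
    (hD2 : ∀ q₀ q₁ v, fderiv ℝ (fun y => Ld (q₀, y)) q₁ v = dotProduct (D2Ld q₀ q₁) v)
    (q : ℕ → Fin n → ℝ)
    (hgni : ∀ k : ℕ,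
      (P (q (k + 1)))ᵀ.mulVec (D1Ld (q (k + 1)) (q (k + 2)) + D2Ld (q k) (q (k + 1))) = 0) :
    ∀ k : ℕ, dotProduct (D2Ld (q k) (q (k + 1))) (A.mulVec (q (k + 1))) =
      dotProduct (D2Ld (q 0) (q 1)) (A.mulVec (q 1)) := by
  -- Step 1 : infinitesimal invariance
  have key : ∀ q₀ q₁ : Fin n → ℝ,
      dotProduct (D1Ld q₀ q₁) (A.mulVec q₀) + dotProduct (D2Ld q₀ q₁) (A.mulVec q₁) = 0 := by
    intro q₀ q₁
    set φ := fderiv ℝ Ld (q₀, q₁) with hφ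
    have h1 := hasDerivAt_exp_mulVec A q₀
    have h2 := hasDerivAt_exp_mulVec A q₁
    have hpair : HasDerivAt
        (fun t : ℝ => ((NormedSpace.exp (t • A)).mulVec q₀,
          (NormedSpace.exp (t • A)).mulVec q₁))
        (A.mulVec q₀, A.mulVec q₁) 0 := h1.prodMk h2
    have hpt : ((NormedSpace.exp ((0 : ℝ) • A)).mulVec q₀,
        (NormedSpace.exp ((0 : ℝ) • A)).mulVec q₁) = (q₀, q₁) := by
      simp [zero_smul, NormedSpace.exp_zero, Matrix.one_mulVec]
    have hLd' : HasFDerivAt Ld φ ((NormedSpace.exp ((0 : ℝ) • A)).mulVec q₀,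
        (NormedSpace.exp ((0 : ℝ) • A)).mulVec q₁) := by
      rw [hpt]; exact (hLd (q₀, q₁)).hasFDerivAt
    have hcomp : HasDerivAt
        (fun t : ℝ => Ld ((NormedSpace.exp (t • A)).mulVec q₀,
          (NormedSpace.exp (t • A)).mulVec q₁))
        (φ (A.mulVec q₀, A.mulVec q₁)) 0 := by
      have := hLd'.comp_hasDerivAt 0 hpair
      simpa [Function.comp_def] using this
    have hconst : (fun t : ℝ => Ld ((NormedSpace.exp (t • A)).mulVec q₀,
        (NormedSpace.exp (t • A)).mulVec q₁)) = fun _ => Ld (q₀, q₁) := by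
      funext t; exact hinv t q₀ q₁
    have hzero : φ (A.mulVec q₀, A.mulVec q₁) = 0 := by
      have hc : HasDerivAt (fun _ : ℝ => Ld (q₀, q₁)) 0 (0 : ℝ) := hasDerivAt_const _ _
      have := hconst ▸ hcomp
      exact this.unique hc
    -- partial derivatives
    have hfst : HasFDerivAt (fun x => Ld (x, q₁))
        (φ.comp (ContinuousLinearMap.inl ℝ (Fin n → ℝ) (Fin n → ℝ))) q₀ :=
      (hLd (q₀, q₁)).hasFDerivAt.comp q₀ (hasFDerivAt_prodMk_left q₀ q₁)
    have hsnd : HasFDerivAt (fun y => Ld (q₀, y))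
        (φ.comp (ContinuousLinearMap.inr ℝ (Fin n → ℝ) (Fin n → ℝ))) q₁ :=
      (hLd (q₀, q₁)).hasFDerivAt.comp q₁ (hasFDerivAt_prodMk_right q₀ q₁)
    have e1 : dotProduct (D1Ld q₀ q₁) (A.mulVec q₀) = φ (A.mulVec q₀, 0) := by
      rw [← hD1 q₀ q₁ (A.mulVec q₀), hfst.fderiv]
      simp [ContinuousLinearMap.comp_apply]
    have e2 : dotProduct (D2Ld q₀ q₁) (A.mulVec q₁) = φ (0, A.mulVec q₁) := by
      rw [← hD2 q₀ q₁ (A.mulVec q₁), hsnd.fderiv]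
      simp [ContinuousLinearMap.comp_apply]
    rw [e1, e2, ← map_add]
    simpa using hzero
  -- Step 2 : Q q annihilates A q
  have hQA : ∀ p : Fin n → ℝ, (Q p).mulVec (A.mulVec p) = 0 := by
    intro p
    rw [hQ p, ← Matrix.mulVec_mulVec, hhoriz p, Matrix.mulVec_zero]
  -- Step 3 : GNI step gives D1·Aq = -D2·Aq
  have hstep : ∀ k : ℕ,
      dotProduct (D1Ld (q (k + 1)) (q (k + 2))) (A.mulVec (q (k + 1))) +
        dotProduct (D2Ld (q k) (q (k + 1))) (A.mulVec (q (k + 1))) = 0 := by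
    intro k
    set w := D1Ld (q (k + 1)) (q (k + 2)) + D2Ld (q k) (q (k + 1)) with hw
    have hPw := hgni k
    rw [hP (q (k + 1))] at hPw
    have hwQ : w = (Q (q (k + 1)))ᵀ.mulVec w := by
      have : (1 - (Q (q (k + 1)))ᵀ).mulVec w = 0 := by
        simpa [Matrix.transpose_sub, Matrix.transpose_one] using hPw
      have h2 : w - (Q (q (k + 1)))ᵀ.mulVec w = 0 := by
        simpa [Matrix.sub_mulVec, Matrix.one_mulVec] using this
      have := sub_eq_zero.mp h2
      exact this
    have hdot : dotProduct w (A.mulVec (q (k + 1))) = 0 := by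
      rw [hwQ]
      rw [dotProduct_comm, Matrix.dotProduct_mulVec, Matrix.vecMul_transpose,
        hQA (q (k + 1))]
      simp
    simpa [hw, add_dotProduct] using hdot
  -- Step 4 : induction
  intro k
  induction k with
  | zero => rfl
  | succ k ih =>
    have h1 := key (q (k + 1)) (q (k + 2))
    have h2 := hstep k
    have : dotProduct (D2Ld (q (k + 1)) (q (k + 2))) (A.mulVec (q (k + 2))) =
        dotProduct (D2Ld (q k) (q (k + 1))) (A.mulVec (q (k + 1))) := by linarith
    calc dotProduct (D2Ld (q (k + 1)) (q (k + 1 + 1))) (A.mulVec (q (k + 1 + 1)))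
        = dotProduct (D2Ld (q k) (q (k + 1))) (A.mulVec (q (k + 1))) := this
      _ = dotProduct (D2Ld (q 0) (q 1)) (A.mulVec (q 1)) := ih
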